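/- For an integer k ≥ 2 and 0 ≤ i < k, define Q_k(i) = ∏_{0 ≤ j < k, j ≠ i} |2^j − 2^i|. Then Q_k(0) ≥ Q_k(1), and for 1 ≤ i ≤ k − 2 one has Q_k(i)/Q_k(i+1) = (2^{k−1} − 2^i)/((2^{i+1} − 1)·2^{k−2}) < 2/3; in particular Q_k(1) ≤ Q_k(2) ≤ ⋯ ≤ Q_k(k−1), so Q_k(i) is minimized at i = 1. -/

import Mathlib

noncomputable def Paux (m : ℕ) : ℝ := ∏ d ∈ Finset.range m, ((2:ℝ)^(d+1) - 1)

lemma Paux_pos (m : ℕ) : 0 < Paux m := by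
  apply Finset.prod_pos
  intro d _
  have : (2:ℝ) ≤ 2^(d+1) := by
    calc (2:ℝ) = 2^1 := by norm_num
    _ ≤ 2^(d+1) := by apply pow_le_pow_right₀ (by norm_num); omega
  linarith

lemma Paux_succ (m : ℕ) : Paux (m+1) = Paux m * ((2:ℝ)^(m+1) - 1) :=
  Finset.prod_range_succ _ _

lemma Q_closed (i c : ℕ) :
    ∏ j ∈ (Finset.range (i+c+1)).erase i, |(2:ℝ)^j - 2^i| =
      2^(∑ j ∈ Finset.range i, j) * 2^(i*c) * Paux i * Paux c := by
  have hset : (Finset.range (i+c+1)).erase i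
      = Finset.range i ∪ Finset.Ico (i+1) (i+c+1) := by
    ext j
    simp only [Finset.mem_erase, Finset.mem_range, Finset.mem_union, Finset.mem_Ico]
    omega
  have hdisj : Disjoint (Finset.range i) (Finset.Ico (i+1) (i+c+1)) := by
    simp only [Finset.disjoint_left, Finset.mem_range, Finset.mem_Ico]
    omega
  rw [hset, Finset.prod_union hdisj]
  have h1 : ∏ j ∈ Finset.range i, |(2:ℝ)^j - 2^i|
      = 2^(∑ j ∈ Finset.range i, j) * Paux i := by
    have e1 : ∀ j ∈ Finset.range i, |(2:ℝ)^j - 2^i| = 2^j * ((2:ℝ)^(i-j) - 1) := by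
      intro j hj
      rw [Finset.mem_range] at hj
      have : (2:ℝ)^j * 2^(i-j) = 2^i := by rw [← pow_add]; congr 1; omega
      have hle : (2:ℝ)^j ≤ 2^i := by apply pow_le_pow_right₀ (by norm_num); omega
      rw [abs_of_nonpos (by linarith), mul_sub, mul_one, this]
      ring
    rw [Finset.prod_congr rfl e1, Finset.prod_mul_distrib, Finset.prod_pow_eq_pow_sum]
    congr 1
    rw [Paux, ← Finset.prod_range_reflect]
    apply Finset.prod_congr rfl
    intro j hj
    rw [Finset.mem_range] at hj
    congr 2
    omega
  have h2 : ∏ j ∈ Finset.Ico (i+1) (i+c+1), |(2:ℝ)^j - 2^i| = 2^(i*c) * Paux c := by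
    rw [Finset.prod_Ico_eq_prod_range]
    have hc : i + c + 1 - (i+1) = c := by omega
    rw [hc]
    have e2 : ∀ j ∈ Finset.range c, |(2:ℝ)^(i+1+j) - 2^i| = 2^i * ((2:ℝ)^(j+1) - 1) := by
      intro j hj
      have : (2:ℝ)^i * 2^(j+1) = 2^(i+1+j) := by rw [← pow_add]; congr 1; omega
      have hle : (2:ℝ)^i ≤ 2^(i+1+j) := by apply pow_le_pow_right₀ (by norm_num); omega
      rw [abs_of_nonneg (by linarith), mul_sub, mul_one, this]
    rw [Finset.prod_congr rfl e2, Finset.prod_mul_distrib, Finset.prod_const,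
      Finset.card_range, Paux, ← pow_mul]
  rw [h1, h2]
  ring

/-- For `k ≥ 2` and `Q_k(i) = ∏_{0 ≤ j < k, j ≠ i} |2^j - 2^i|`: one has `Q_k(1) ≤ Q_k(0)`;
for `1 ≤ i ≤ k - 2`, `Q_k(i)/Q_k(i+1) = (2^(k-1) - 2^i)/((2^(i+1) - 1)·2^(k-2)) < 2/3`,
hence `Q_k(1) ≤ Q_k(2) ≤ ⋯ ≤ Q_k(k-1)`; in particular `Q_k` is minimized at `i = 1`. -/
theorem Qk_minimized_at_one (k : ℕ) (hk : 2 ≤ k) :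
    let Q : ℕ → ℝ := fun i => ∏ j ∈ (Finset.range k).erase i, |(2 : ℝ) ^ j - 2 ^ i|
    Q 1 ≤ Q 0 ∧
      (∀ i : ℕ, 1 ≤ i → i ≤ k - 2 →
        Q i / Q (i + 1) =
            ((2 : ℝ) ^ (k - 1) - 2 ^ i) / (((2 : ℝ) ^ (i + 1) - 1) * 2 ^ (k - 2)) ∧
          Q i / Q (i + 1) < 2 / 3) ∧
      (∀ i : ℕ, 1 ≤ i → i ≤ k - 2 → Q i ≤ Q (i + 1)) ∧
      (∀ i : ℕ, i < k → Q 1 ≤ Q i) := by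
  intro Q
  -- closed form, specialized
  have hQ : ∀ i c : ℕ, k = i + c + 1 →
      Q i = 2^(∑ j ∈ Finset.range i, j) * 2^(i*c) * Paux i * Paux c := by
    intro i c hkeq
    simp only [Q, hkeq]
    exact Q_closed i c
  have hQpos : ∀ i : ℕ, i < k → 0 < Q i := by
    intro i hi
    obtain ⟨c, hc⟩ : ∃ c, k = i + c + 1 := ⟨k - i - 1, by omega⟩
    rw [hQ i c hc]
    have := Paux_pos i
    have := Paux_pos c
    positivity
  -- Part 1 : Q 1 ≤ Q 0
  have part1 : Q 1 ≤ Q 0 := by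
    obtain ⟨m, hm⟩ : ∃ m, k = m + 2 := ⟨k - 2, by omega⟩
    have hp1 : Paux 1 = 1 := by norm_num [Paux]
    have hp0 : Paux 0 = 1 := by norm_num [Paux]
    have h0 : Q 0 = Paux (m+1) := by
      rw [hQ 0 (m+1) (by omega), hp0]
      norm_num
    have h1 : Q 1 = 2^m * Paux m := by
      rw [hQ 1 m (by omega), hp1]
      norm_num
    rw [h0, h1, Paux_succ]
    have hP := Paux_pos m
    have h2m : (1:ℝ) ≤ 2^m := one_le_pow₀ (by norm_num)
    have : (2:ℝ)^(m+1) = 2 * 2^m := by ring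
    nlinarith
  -- Part 2
  have part2 : ∀ i : ℕ, 1 ≤ i → i ≤ k - 2 →
      Q i / Q (i + 1) =
          ((2 : ℝ) ^ (k - 1) - 2 ^ i) / (((2 : ℝ) ^ (i + 1) - 1) * 2 ^ (k - 2)) ∧
        Q i / Q (i + 1) < 2 / 3 := by
    intro i hi1 hi2
    obtain ⟨c, hc⟩ : ∃ c, k = i + c + 2 := ⟨k - i - 2, by omega⟩
    have hQi : Q i = 2^(∑ j ∈ Finset.range i, j) * 2^(i*(c+1)) * Paux i * Paux (c+1) :=
      hQ i (c+1) (by omega)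
    have hQi1 : Q (i+1) = 2^(∑ j ∈ Finset.range (i+1), j) * 2^((i+1)*c) * Paux (i+1) * Paux c :=
      hQ (i+1) c (by omega)
    have hsum : ∑ j ∈ Finset.range (i+1), j = (∑ j ∈ Finset.range i, j) + i :=
      Finset.sum_range_succ _ _
    have hPi := Paux_pos i
    have hPc := Paux_pos c
    have hpow1 : (0:ℝ) < 2^(∑ j ∈ Finset.range i, j) := by positivity
    have h2i1 : (4:ℝ) ≤ 2^(i+1) := by
      calc (4:ℝ) = 2^2 := by norm_num
      _ ≤ 2^(i+1) := by apply pow_le_pow_right₀ (by norm_num); omega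
    have h2c : (1:ℝ) ≤ 2^c := one_le_pow₀ (by norm_num)
    -- the ratio in simplified form
    have hratio : Q i / Q (i+1) = ((2:ℝ)^(c+1) - 1) / (((2:ℝ)^(i+1) - 1) * 2^c) := by
      rw [hQi, hQi1, hsum, Paux_succ i, Paux_succ c]
      have e1 : (2:ℝ)^(∑ j ∈ Finset.range i, j + i) = 2^(∑ j ∈ Finset.range i, j) * 2^i := by
        rw [pow_add]
      have e2 : (2:ℝ)^(i*(c+1)) = 2^(i*c) * 2^i := by rw [← pow_add]; congr 1
      have e3 : (2:ℝ)^((i+1)*c) = 2^(i*c) * 2^c := by rw [← pow_add]; congr 1; ring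
      rw [e1, e2, e3]
      have h2ic : (0:ℝ) < 2^(i*c) := by positivity
      have h2i : (0:ℝ) < 2^i := by positivity
      have h2cp : (0:ℝ) < 2^c := by positivity
      have hi1' : (0:ℝ) < 2^(i+1) - 1 := by linarith
      have hc1' : (0:ℝ) < 2^(c+1) - 1 := by
        have : (2:ℝ) ≤ 2^(c+1) := by
          calc (2:ℝ) = 2^1 := by norm_num
          _ ≤ 2^(c+1) := by apply pow_le_pow_right₀ (by norm_num); omega
        linarith
      field_simp
    constructor
    · rw [hratio]
      have ek1 : k - 1 = i + c + 1 := by omega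
      have ek2 : k - 2 = i + c := by omega
      rw [ek1, ek2]
      have e4 : (2:ℝ)^(i+c+1) = 2^i * 2^(c+1) := by rw [← pow_add]; congr 1
      have e5 : (2:ℝ)^(i+c) = 2^i * 2^c := by rw [← pow_add]
      rw [e4, e5]
      have h2i : (0:ℝ) < 2^i := by positivity
      have hi1' : (0:ℝ) < 2^(i+1) - 1 := by linarith
      have h2cp : (0:ℝ) < 2^c := by positivity
      field_simp
    · rw [hratio]
      rw [div_lt_div_iff₀ (by nlinarith) (by norm_num)]
      have : (2:ℝ)^(c+1) = 2 * 2^c := by ring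
      nlinarith
  -- Part 3
  have part3 : ∀ i : ℕ, 1 ≤ i → i ≤ k - 2 → Q i ≤ Q (i + 1) := by
    intro i hi1 hi2
    have h := (part2 i hi1 hi2).2
    have hp : 0 < Q (i+1) := hQpos (i+1) (by omega)
    rw [div_lt_iff₀ hp] at h
    nlinarith
  have part4 : ∀ i : ℕ, i < k → 1 ≤ i → Q 1 ≤ Q i := by
    intro i
    induction i with
    | zero => omega
    | succ n ih =>
      intro hik _
      rcases Nat.eq_zero_or_pos n with rfl | hn
      · exact le_refl _
      · exact le_trans (ih (by omega) hn) (part3 n hn (by omega))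
  refine ⟨part1, part2, part3, ?_⟩
  intro i hik
  rcases Nat.eq_zero_or_pos i with rfl | hi
  · exact part1
  · exact part4 i hik hi
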